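/- arXiv:1603.02121 — 2 statements merged into one kernel-verified Lean document; each statement's English description precedes it below -/
import Mathlib

section
/- For every ε > 0 and t ∈ ℝ, the quotient |φ⁻¹(ε + it) − φ⁻¹(it)| / (1 − |φ⁻¹(ε + it)|) equals (√((1+ε)² + t²) + √((1−ε)² + t²)) / (2√(1 + t²)), where φ⁻¹(w) = (w−1)/(w+1) is the inverse Cayley transform. -/
/-- The inverse Cayley transform. -/
noncomputable def cayleyInv (w : ℂ) : ℂ := (w - 1) / (w + 1)

/-- Explicit formula for the Stolz-type quotient of the inverse Cayley transform. -/
theorem cayleyInv_stolz_quotient (ε t : ℝ) (hε : 0 < ε) :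
    ‖cayleyInv (ε + t * Complex.I) - cayleyInv (t * Complex.I)‖ /
      (1 - ‖cayleyInv (ε + t * Complex.I)‖) =
    (Real.sqrt ((1 + ε) ^ 2 + t ^ 2) + Real.sqrt ((1 - ε) ^ 2 + t ^ 2)) /
      (2 * Real.sqrt (1 + t ^ 2)) := by
  set A := Real.sqrt ((1 + ε) ^ 2 + t ^ 2) with hAdef
  set B := Real.sqrt ((1 - ε) ^ 2 + t ^ 2) with hBdef
  set C := Real.sqrt (1 + t ^ 2) with hCdef
  have hA2 : A ^ 2 = (1 + ε) ^ 2 + t ^ 2 := Real.sq_sqrt (by positivity)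
  have hB2 : B ^ 2 = (1 - ε) ^ 2 + t ^ 2 := Real.sq_sqrt (by positivity)
  have hC2 : C ^ 2 = 1 + t ^ 2 := Real.sq_sqrt (by positivity)
  have hApos : 0 < A := Real.sqrt_pos.2 (by positivity)
  have hBnn : 0 ≤ B := Real.sqrt_nonneg _
  have hCpos : 0 < C := Real.sqrt_pos.2 (by positivity)
  have hAB : B < A := by
    nlinarith [hA2, hB2, hApos, hBnn]
  have hden1 : (ε + t * Complex.I + 1) ≠ 0 := by
    intro h
    have := congrArg Complex.re h
    simp at this
    linarith
  have hden2 : (t * Complex.I + 1) ≠ 0 := by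
    intro h
    have := congrArg Complex.re h
    simp at this
  have hn1 : ‖(ε : ℂ) + t * Complex.I + 1‖ = A := by
    rw [Complex.norm_def, Complex.normSq_apply]
    simp
    rw [hAdef]
    congr 1
    ring
  have hn2 : ‖(t : ℝ) * Complex.I + 1‖ = C := by
    rw [Complex.norm_def, Complex.normSq_apply]
    simp
    rw [hCdef]
    congr 1
    ring
  have hn3 : ‖(ε : ℂ) + t * Complex.I - 1‖ = B := by
    rw [Complex.norm_def, Complex.normSq_apply]
    simp
    rw [hBdef]
    congr 1
    ring
  have h1 : ‖cayleyInv (ε + t * Complex.I)‖ = B / A := by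
    unfold cayleyInv
    rw [norm_div, hn1, hn3]
  have hdiff : cayleyInv (ε + t * Complex.I) - cayleyInv (t * Complex.I)
      = (2 * ε) / ((ε + t * Complex.I + 1) * (t * Complex.I + 1)) := by
    unfold cayleyInv
    field_simp
    ring
  have h2 : ‖cayleyInv (ε + t * Complex.I) - cayleyInv (t * Complex.I)‖
      = 2 * ε / (A * C) := by
    rw [hdiff, norm_div, norm_mul, norm_mul, hn1, hn2]
    simp [Complex.norm_real, abs_of_pos hε]
  rw [h1, h2]
  have key : A ^ 2 - B ^ 2 = 4 * ε := by rw [hA2, hB2]; ring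
  have hABne : A - B ≠ 0 := by linarith
  have h4 : (A + B) * (A - B) = 4 * ε := by linear_combination key
  field_simp
  linear_combination (-1 : ℝ) * key
end

section
/- Consequently, for every α > 2 there exists ε₀ > 0 such that for all 0 < ε < ε₀ and all t ∈ ℝ, the point φ⁻¹(ε + it) lies in the Stolz region S(φ⁻¹(it), α) = {z ∈ 𝔻 : |z − φ⁻¹(it)| < α(1 − |z|)}. -/
/-- For every `α > 2` there is `ε₀ > 0` such that for all `0 < ε < ε₀` and all real `t`,
the point `cayleyInv (ε + it)` lies in the Stolz region `S(cayleyInv (it), α)`. -/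
theorem cayleyInv_mem_stolz (α : ℝ) (hα : 2 < α) :
    ∃ ε₀ : ℝ, 0 < ε₀ ∧ ∀ ε : ℝ, 0 < ε → ε < ε₀ → ∀ t : ℝ,
      ‖cayleyInv (ε + t * Complex.I)‖ < 1 ∧
      ‖cayleyInv (ε + t * Complex.I) - cayleyInv (t * Complex.I)‖ <
        α * (1 - ‖cayleyInv (ε + t * Complex.I)‖) := by
  refine ⟨1, one_pos, fun ε hε hε1 t => ?_⟩
  set v : ℂ := (t : ℂ) * Complex.I with hv
  set w : ℂ := (ε : ℂ) + v with hw
  have hA2 : ‖w + 1‖ ^ 2 = (ε + 1) ^ 2 + t ^ 2 := by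
    rw [Complex.sq_norm, Complex.normSq_apply]
    simp [hw, hv]
    ring
  have hB2 : ‖w - 1‖ ^ 2 = (ε - 1) ^ 2 + t ^ 2 := by
    rw [Complex.sq_norm, Complex.normSq_apply]
    simp [hw, hv]
    ring
  have hC2 : ‖v + 1‖ ^ 2 = 1 + t ^ 2 := by
    rw [Complex.sq_norm, Complex.normSq_apply]
    simp [hv]
    ring
  have hApos : 0 < ‖w + 1‖ := by
    have h : (0 : ℝ) < ‖w + 1‖ ^ 2 := by rw [hA2]; positivity
    nlinarith [norm_nonneg (w + 1)]
  have hCpos : 0 < ‖v + 1‖ := by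
    have h : (0 : ℝ) < ‖v + 1‖ ^ 2 := by rw [hC2]; positivity
    nlinarith [norm_nonneg (v + 1)]
  have hw1 : w + 1 ≠ 0 := by
    intro h; rw [h, norm_zero] at hApos; exact lt_irrefl _ hApos
  have hv1 : v + 1 ≠ 0 := by
    intro h; rw [h, norm_zero] at hCpos; exact lt_irrefl _ hCpos
  have hBA : ‖w - 1‖ < ‖w + 1‖ := by
    apply lt_of_pow_lt_pow_left₀ 2 (le_of_lt hApos)
    rw [hA2, hB2]; nlinarith
  have hsum : ‖w + 1‖ + ‖w - 1‖ ≤ 3 * ‖v + 1‖ := by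
    have h1 : ‖w + 1‖ ≤ 2 * ‖v + 1‖ := by
      apply le_of_pow_le_pow_left₀ (two_ne_zero) (by positivity)
      rw [mul_pow, hA2, hC2]; nlinarith
    have h2 : ‖w - 1‖ ≤ ‖v + 1‖ := by
      apply le_of_pow_le_pow_left₀ (two_ne_zero) (le_of_lt hCpos)
      rw [hB2, hC2]; nlinarith
    linarith
  have hprod : (‖w + 1‖ - ‖w - 1‖) * (‖w + 1‖ + ‖w - 1‖) = 4 * ε := by
    have : ‖w + 1‖ ^ 2 - ‖w - 1‖ ^ 2 = 4 * ε := by rw [hA2, hB2]; ring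
    nlinarith [this]
  have hdiff : cayleyInv w - cayleyInv v = ((2 * ε : ℝ) : ℂ) / ((w + 1) * (v + 1)) := by
    unfold cayleyInv
    rw [hw]
    have hw1' : (ε : ℂ) + v + 1 ≠ 0 := hw1
    rw [div_sub_div _ _ hw1' hv1]; push_cast
    ring
  have hnz : ‖cayleyInv w‖ = ‖w - 1‖ / ‖w + 1‖ := by
    unfold cayleyInv; rw [norm_div]
  have hnd : ‖cayleyInv w - cayleyInv v‖ = (2 * ε) / (‖w + 1‖ * ‖v + 1‖) := by
    rw [hdiff, norm_div, norm_mul, Complex.norm_real, Real.norm_eq_abs,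
      abs_of_nonneg (by positivity)]
  constructor
  · rw [hnz, div_lt_one hApos]; exact hBA
  · rw [hnz, hnd]
    have h1 : 1 - ‖w - 1‖ / ‖w + 1‖ = (‖w + 1‖ - ‖w - 1‖) / ‖w + 1‖ := by
      rw [sub_div, div_self hApos.ne']
    rw [h1, ← mul_div_assoc, div_lt_div_iff₀ (by positivity) hApos]
    have h0 : 0 ≤ α * (‖w + 1‖ - ‖w - 1‖) := by
      apply mul_nonneg (by linarith) (by linarith)
    have h3 : α * (‖w + 1‖ - ‖w - 1‖) * (‖w + 1‖ + ‖w - 1‖) ≤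
        α * (‖w + 1‖ - ‖w - 1‖) * (3 * ‖v + 1‖) := mul_le_mul_of_nonneg_left hsum h0
    have h2 : α * ((‖w + 1‖ - ‖w - 1‖) * (‖w + 1‖ + ‖w - 1‖)) = α * (4 * ε) := by
      rw [hprod]
    have key : 2 * ε < α * (‖w + 1‖ - ‖w - 1‖) * ‖v + 1‖ := by
      nlinarith [mul_pos (sub_pos.2 hα) hε]
    nlinarith [mul_lt_mul_of_pos_right key hApos]
end
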